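/- Let Λ be a local finite dimensional algebra over an algebraically closed field. Then every τ-rigid Λ-module is projective; in particular Λ is CM-τ-tilting free. -/

import Mathlib

set_option linter.unusedSectionVars false
set_option linter.unusedVariables false
set_option maxHeartbeats 1000000

open Function LinearMap MulOpposite

noncomputable section

/-- A submodule `N ≤ P` is superfluous (small) if any complement generating together with it
the whole module must itself be the whole module. -/
def IsSuperfluous (R : Type) [Ring R] {P : Type} [AddCommGroup P] [Module R P]
    (N : Submodule R P) : Prop :=
  ∀ N' : Submodule R P, N ⊔ N' = ⊤ → N' = ⊤

/-- `P₁ →f P₀ →g M → 0` is a minimal projective presentation. -/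
structure IsMinimalProjPresentation {R : Type} [Ring R] {P₁ P₀ M : Type}
    [AddCommGroup P₁] [AddCommGroup P₀] [AddCommGroup M]
    [Module R P₁] [Module R P₀] [Module R M]
    (f : P₁ →ₗ[R] P₀) (g : P₀ →ₗ[R] M) : Prop where
  projective₁ : Module.Projective R P₁
  projective₀ : Module.Projective R P₀
  finite₁ : Module.Finite R P₁
  finite₀ : Module.Finite R P₀
  surjective : Surjective g
  exact : LinearMap.range f = LinearMap.ker g
  superfluous₀ : IsSuperfluous R (LinearMap.ker g)
  superfluous₁ : IsSuperfluous R (LinearMap.ker f)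

/-- A finitely generated module is Gorenstein projective if it is (isomorphic to) a syzygy of a
complete exact sequence of finitely generated projective modules which stays exact under
`Hom(-, R)`. -/
def IsGorensteinProjective (R : Type) [Ring R] (M : Type) [AddCommGroup M] [Module R M] : Prop :=
  ∃ (P : ℤ → ModuleCat.{0} R) (d : ∀ i, P i →ₗ[R] P (i + 1)),
    (∀ i, Module.Projective R (P i)) ∧ (∀ i, Module.Finite R (P i)) ∧
    (∀ i, LinearMap.range (d i) = LinearMap.ker (d (i + 1))) ∧
    (∀ i (φ : P (i + 1) →ₗ[R] R), φ.comp (d i) = 0 →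
      ∃ ψ : P (i + 1 + 1) →ₗ[R] R, φ = ψ.comp (d (i + 1))) ∧
    Nonempty (M ≃ₗ[R] LinearMap.range (d 0))

/-- A projective resolution `⋯ → P₁ → P₀ → M → 0` by finitely generated projectives. -/
structure ProjResolution (R : Type) [Ring R] (M : Type) [AddCommGroup M] [Module R M] where
  P : ℕ → ModuleCat.{0} R
  d : ∀ i, P (i + 1) →ₗ[R] P i
  aug : P 0 →ₗ[R] M
  projective : ∀ i, Module.Projective R (P i)
  finite : ∀ i, Module.Finite R (P i)
  surjective : Surjective aug
  exact₀ : LinearMap.range (d 0) = LinearMap.ker aug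
  exact : ∀ i, LinearMap.range (d (i + 1)) = LinearMap.ker (d i)

/-- Projective dimension at most `n`. -/
def ProjDimLE (R : Type) [Ring R] (M : Type) [AddCommGroup M] [Module R M] (n : ℕ) : Prop :=
  ∃ res : ProjResolution R M, ∀ i, n < i → Subsingleton (res.P i)

/-- `M` is semi-Gorenstein projective: `Ext^i(M, R) = 0` for all `i ≥ 1`, expressed as exactness
of the dual of any projective resolution in all positive degrees. -/
def IsSemiGorensteinProjective (R : Type) [Ring R] (M : Type) [AddCommGroup M] [Module R M] :
    Prop :=
  ∀ res : ProjResolution R M, ∀ i (φ : res.P (i + 1) →ₗ[R] R),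
    φ.comp (res.d (i + 1)) = 0 → ∃ ψ : res.P i →ₗ[R] R, φ = ψ.comp (res.d i)

/-- An injective coresolution `0 → N → I⁰ → I¹ → ⋯`. -/
structure InjCoresolution (R : Type) [Ring R] (N : Type) [AddCommGroup N] [Module R N] where
  I : ℕ → ModuleCat.{0} R
  aug : N →ₗ[R] I 0
  d : ∀ i, I i →ₗ[R] I (i + 1)
  injective : ∀ i, Module.Injective R (I i)
  mono : Injective aug
  exact₀ : LinearMap.range aug = LinearMap.ker (d 0)
  exact : ∀ i, LinearMap.range (d i) = LinearMap.ker (d (i + 1))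

/-- Injective dimension at most `n`. -/
def InjDimLE (R : Type) [Ring R] (N : Type) [AddCommGroup N] [Module R N] (n : ℕ) : Prop :=
  ∃ c : InjCoresolution R N, ∀ i, n < i → Subsingleton (c.I i)

/-- A Gorenstein ring: finite self-injective dimension on both sides. -/
def IsGorensteinRing (R : Type) [Ring R] : Prop :=
  ∃ n, InjDimLE R R n ∧ InjDimLE Rᵐᵒᵖ Rᵐᵒᵖ n

/-- Indecomposability: nontrivial, and no nontrivial idempotent endomorphism. -/
def IsIndecomposable (R : Type) [Ring R] (M : Type) [AddCommGroup M] [Module R M] : Prop :=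
  Nontrivial M ∧ ∀ e : M →ₗ[R] M, e.comp e = e → e = 0 ∨ e = LinearMap.id

/-- `Z` is a direct summand of `M`. -/
def IsDirectSummand (R : Type) [Ring R] (Z M : Type) [AddCommGroup Z] [AddCommGroup M]
    [Module R Z] [Module R M] : Prop :=
  ∃ (i : Z →ₗ[R] M) (p : M →ₗ[R] Z), p.comp i = LinearMap.id

/-- `X` lies in `add E`: it is a direct summand of a finite direct sum of copies of `E`. -/
def IsInAdd (R : Type) [Ring R] (E X : Type) [AddCommGroup E] [AddCommGroup X]
    [Module R E] [Module R X] : Prop :=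
  ∃ n : ℕ, IsDirectSummand R X (Fin n → E)

end
open Function LinearMap MulOpposite
noncomputable section

section Transpose
variable {R : Type} [Ring R]
variable {P₁ P₀ : Type} [AddCommGroup P₁] [AddCommGroup P₀] [Module R P₁] [Module R P₀]

/-- The map `Hom_R(P₀, R) → Hom_R(P₁, R)` given by precomposition with `f`. -/
def transposeHomMap (f : P₁ →ₗ[R] P₀) : (P₀ →ₗ[R] R) →ₗ[Rᵐᵒᵖ] (P₁ →ₗ[R] R) where
  toFun g := g.comp f
  map_add' g h := by ext x; simp
  map_smul' a g := rfl

/-- The (Auslander–Bridger) transpose of `M` with respect to a projective presentation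
`P₁ →f P₀ → M → 0`: the cokernel of `Hom(f, R)`, a right `R`-module. -/
abbrev TransposeOf (f : P₁ →ₗ[R] P₀) : Type :=
  (P₁ →ₗ[R] R) ⧸ LinearMap.range (transposeHomMap f)

end Transpose

section Dual
/-- The `K`-linear dual of a right `R`-module, regarded as a left `R`-module. -/
abbrev RightDual (K R N : Type) [Field K] [Ring R] [Algebra K R]
    [AddCommGroup N] [Module K N] [Module Rᵐᵒᵖ N] [SMulCommClass Rᵐᵒᵖ K N] : Type := N →ₗ[K] K

variable (K R N : Type) [Field K] [Ring R] [Algebra K R]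
  [AddCommGroup N] [Module K N] [Module Rᵐᵒᵖ N] [SMulCommClass Rᵐᵒᵖ K N]

variable {R N} in
/-- Right scalar multiplication by `a : R` on `N`, as a `K`-linear map. -/
def opSmulHom (a : R) : N →ₗ[K] N where
  toFun x := op a • x
  map_add' x y := smul_add _ x y
  map_smul' c x := smul_comm (op a) c x

instance : SMul R (RightDual K R N) :=
  ⟨fun a φ => (φ : N →ₗ[K] K).comp (opSmulHom (K := K) a)⟩

instance : Module R (RightDual K R N) :=
  Module.ofMinimalAxioms
    (fun a φ ψ => by apply LinearMap.ext; intro x; rfl)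
    (fun a b φ => by
      apply LinearMap.ext; intro x
      show φ (op (a + b) • x) = φ (op a • x) + φ (op b • x)
      rw [op_add, add_smul, map_add])
    (fun a b φ => by
      apply LinearMap.ext; intro x
      show φ (op (a * b) • x) = φ (op b • op a • x)
      rw [op_mul, mul_smul])
    (fun φ => by
      apply LinearMap.ext; intro x
      show φ (op (1 : R) • x) = φ x
      rw [op_one, one_smul])

end Dual

section Tau
variable (K : Type) [Field K] (R : Type) [Ring R] [Algebra K R]

/-- The Auslander–Reiten translate `τM = D Tr M` of `M` with respect to the projective
presentation `P₁ →f P₀ → M → 0`. -/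
abbrev TauOf {P₁ P₀ : Type} [AddCommGroup P₁] [AddCommGroup P₀] [Module R P₁] [Module R P₀]
    (f : P₁ →ₗ[R] P₀) : Type :=
  RightDual K R (TransposeOf f)

/-- `M` is τ-rigid: `Hom_R(M, τM) = 0` for the AR translate computed from any (equivalently, some)
minimal projective presentation of `M`. -/
def IsTauRigid (M : Type) [AddCommGroup M] [Module R M] : Prop :=
  ∀ (P₁ P₀ : ModuleCat.{0} R) (f : P₁ →ₗ[R] P₀) (g : P₀ →ₗ[R] M),
    IsMinimalProjPresentation f g → ∀ h : M →ₗ[R] TauOf K R f, h = 0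

end Tau
open Function LinearMap MulOpposite
noncomputable section

section LDual
/-- The `K`-linear dual of a left `R`-module, regarded as a right `R`-module
(i.e. an `Rᵐᵒᵖ`-module). -/
abbrev LeftDual (K R N : Type) [Field K] [Ring R] [Algebra K R]
    [AddCommGroup N] [Module K N] [Module R N] [SMulCommClass R K N] : Type := N →ₗ[K] K

variable (K R N : Type) [Field K] [Ring R] [Algebra K R]
  [AddCommGroup N] [Module K N] [Module R N] [SMulCommClass R K N]

variable {R N} in
/-- Left scalar multiplication by `a : R` on `N`, as a `K`-linear map. -/
def smulHom (a : R) : N →ₗ[K] N where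
  toFun x := a • x
  map_add' x y := smul_add _ x y
  map_smul' c x := smul_comm a c x

instance : SMul Rᵐᵒᵖ (LeftDual K R N) :=
  ⟨fun a φ => (φ : N →ₗ[K] K).comp (smulHom (K := K) (unop a))⟩

instance : Module Rᵐᵒᵖ (LeftDual K R N) :=
  Module.ofMinimalAxioms
    (fun a φ ψ => by apply LinearMap.ext; intro x; rfl)
    (fun a b φ => by
      apply LinearMap.ext; intro x
      show φ ((unop (a + b)) • x) = φ (unop a • x) + φ (unop b • x)
      rw [unop_add, add_smul, map_add])
    (fun a b φ => by
      apply LinearMap.ext; intro x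
      show φ (unop (a * b) • x) = φ (unop b • unop a • x)
      rw [unop_mul, mul_smul])
    (fun φ => by
      apply LinearMap.ext; intro x
      show φ (unop (1 : Rᵐᵒᵖ) • x) = φ x
      rw [unop_one, one_smul])

end LDual

/-- The canonical ring homomorphism `R →+* Rᵐᵒᵖᵐᵒᵖ`. -/
def opOpRingHom (R : Type) [Ring R] : R →+* Rᵐᵒᵖᵐᵒᵖ where
  toFun a := op (op a)
  map_one' := rfl
  map_mul' a b := rfl
  map_zero' := rfl
  map_add' a b := rfl

section TauInv
variable (K R : Type) [Field K] [Ring R] [Algebra K R]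

/-- `N` is `τ⁻¹`-rigid: `Hom_R(τ⁻¹N, N) = 0`, where `τ⁻¹N = Tr D N` is computed from any
minimal projective presentation over `Rᵐᵒᵖ` of the dual `D N`. -/
def IsTauInvRigid (N : Type) [AddCommGroup N] [Module K N] [Module R N]
    [SMulCommClass R K N] : Prop :=
  ∀ (Q₁ Q₀ : ModuleCat.{0} Rᵐᵒᵖ) (f : Q₁ →ₗ[Rᵐᵒᵖ] Q₀) (g : Q₀ →ₗ[Rᵐᵒᵖ] LeftDual K R N),
    IsMinimalProjPresentation f g →
      letI : Module R (TransposeOf f) := Module.compHom _ (opOpRingHom R)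
      ∀ h : TransposeOf f →ₗ[R] N, h = 0

end TauInv

section DualRing
variable (K R : Type) [Field K] [Ring R] [Algebra K R]

/-- `D R = Hom_K(R, K)`, the `K`-dual of the algebra, as a left `R`-module
(the minimal injective cogenerator `DΛ`). -/
abbrev DualOfRing : Type := RightDual K R R

/-- `N` is semi-Gorenstein injective : `Ext^i_R(DR, N) = 0` for all `i ≥ 1`, expressed via
exactness of `Hom(DR, -)` applied to any injective coresolution of `N` in positive degrees. -/
def IsSemiGorensteinInjective (N : Type) [AddCommGroup N] [Module R N] : Prop :=
  ∀ c : InjCoresolution R N, ∀ i (φ : DualOfRing K R →ₗ[R] c.I (i + 1)),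
    (c.d (i + 1)).comp φ = 0 → ∃ ψ : DualOfRing K R →ₗ[R] c.I i, φ = (c.d i).comp ψ

/-- `N` is Gorenstein injective: a cosyzygy of a complete exact sequence of injectives which
stays exact under `Hom_R(DR, -)`. -/
def IsGorensteinInjective (N : Type) [AddCommGroup N] [Module R N] : Prop :=
  ∃ (I : ℤ → ModuleCat.{0} R) (d : ∀ i, I i →ₗ[R] I (i + 1)),
    (∀ i, Module.Injective R (I i)) ∧
    (∀ i, LinearMap.range (d i) = LinearMap.ker (d (i + 1))) ∧
    (∀ i (φ : DualOfRing K R →ₗ[R] I (i + 1)), (d (i + 1)).comp φ = 0 →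
      ∃ ψ : DualOfRing K R →ₗ[R] I i, φ = (d i).comp ψ) ∧
    Nonempty (N ≃ₗ[R] LinearMap.range (d 0))

/-- `Λ` is CM-τ-tilting free: every finitely generated Gorenstein projective τ-rigid module
is projective. -/
def IsCMTauTiltingFree : Prop :=
  ∀ (M : ModuleCat.{0} R), Module.Finite R M → IsGorensteinProjective R M →
    IsTauRigid K R M → Module.Projective R M

/-- Vanishing of `Ext¹_R(T, T)`: every short exact sequence `0 → T → X → T → 0` splits. -/
def Ext1SelfVanishes (T : Type) [AddCommGroup T] [Module R T] : Prop :=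
  ∀ (X : ModuleCat.{0} R) (i : T →ₗ[R] X) (p : X →ₗ[R] T),
    Injective i → Surjective p → LinearMap.range i = LinearMap.ker p →
      ∃ r : X →ₗ[R] T, r.comp i = LinearMap.id

/-- `T` is a (classical) tilting module of projective dimension at most 1. -/
def IsTiltingModule (T : Type) [AddCommGroup T] [Module R T] : Prop :=
  ProjDimLE R T 1 ∧ Ext1SelfVanishes R T ∧
    ∃ (T₀ T₁ : ModuleCat.{0} R) (u : R →ₗ[R] T₀) (v : T₀ →ₗ[R] T₁),
      IsInAdd R T T₀ ∧ IsInAdd R T T₁ ∧ Injective u ∧ Surjective v ∧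
        LinearMap.range u = LinearMap.ker v

end DualRing


set_option linter.unusedSectionVars false
open Function LinearMap Submodule MulOpposite

section LocalTools
variable {R : Type} [Ring R] [IsLocalRing R]

theorem myMulComm {a b : R} (h : a * b = 1) : b * a = 1 := by
  have h1 : a * (1 - b * a) = 0 := by
    have : a * (b * a) = (a * b) * a := by rw [mul_assoc]
    calc a * (1 - b * a) = a - a * (b * a) := by rw [mul_sub, mul_one]
    _ = 0 := by rw [this, h, one_mul, sub_self]
  rcases IsLocalRing.isUnit_or_isUnit_of_add_one (a := b * a) (b := 1 - b * a) (by abel) with hu | hu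
  · have h2 : (b * a) * (b * a) = (b * a) * 1 := by
      rw [mul_one, mul_assoc b a (b * a), ← mul_assoc a b a, h, one_mul]
    exact (hu.mul_left_cancel h2) ▸ rfl
  · exfalso
    obtain ⟨u, hu'⟩ := hu
    have ha : a = 0 := by
      have h2 : a * ((1 - b * a) * ↑u⁻¹) = 0 := by rw [← mul_assoc, h1, zero_mul]
      rw [← hu', Units.mul_inv, mul_one] at h2
      exact h2
    rw [ha, zero_mul] at h
    exact one_ne_zero h.symm

theorem myUnitLeft {a b : R} (h : IsUnit (a * b)) : IsUnit a := by
  obtain ⟨u, hu⟩ := h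
  have h1 : a * (b * ↑u⁻¹) = 1 := by rw [← mul_assoc, ← hu, Units.mul_inv]
  exact isUnit_iff_exists.mpr ⟨_, h1, myMulComm h1⟩

theorem myUnitRight {a b : R} (h : IsUnit (a * b)) : IsUnit b := by
  obtain ⟨u, hu⟩ := h
  have h1 : (↑u⁻¹ * a) * b = 1 := by rw [mul_assoc, ← hu, Units.inv_mul]
  exact isUnit_iff_exists.mpr ⟨_, myMulComm h1, h1⟩

/-- the ideal of nonunits in a local ring -/
def nonunitIdeal (R : Type) [Ring R] [IsLocalRing R] : Ideal R where
  carrier := {a | ¬IsUnit a}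
  add_mem' := by
    intro a b ha hb hab
    obtain ⟨u, hu⟩ := hab
    have : a * ↑u⁻¹ + b * ↑u⁻¹ = 1 := by rw [← add_mul, ← hu, Units.mul_inv]
    rcases IsLocalRing.isUnit_or_isUnit_of_add_one this with h | h
    · exact ha (myUnitLeft h)
    · exact hb (myUnitLeft h)
  zero_mem' := by simp [not_isUnit_zero]
  smul_mem' := by
    intro c a ha h
    exact ha (myUnitRight (a := c) h)

theorem mem_nonunitIdeal {a : R} : a ∈ nonunitIdeal R ↔ ¬IsUnit a := Iff.rfl

theorem nonunitIdeal_mul_mem {a : R} (ha : a ∈ nonunitIdeal R) (b : R) :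
    a * b ∈ nonunitIdeal R := fun h => ha (myUnitLeft h)

theorem span_removal {N : Type} [AddCommGroup N] [Module R N] {m : ℕ}
    (x : Fin (m + 1) → N) (i₀ : Fin (m + 1))
    (hspan : span R (Set.range x) = ⊤)
    (hmem : x i₀ ∈ span R (Set.range (x ∘ i₀.succAbove))) :
    span R (Set.range (x ∘ i₀.succAbove)) = ⊤ := by
  rw [← top_le_iff, ← hspan, span_le]
  rintro - ⟨i, rfl⟩
  by_cases hi : i = i₀
  · exact hi ▸ hmem
  · obtain ⟨j, hj⟩ := Fin.exists_succAbove_eq hi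
    exact subset_span ⟨j, congrArg x hj⟩

theorem exists_min_gen (N : Type) [AddCommGroup N] [Module R N] [Module.Finite R N] :
    ∃ (n : ℕ) (x : Fin n → N), span R (Set.range x) = ⊤ ∧
      (∀ c : Fin n → R, (∑ i, c i • x i) = 0 → ∀ i, ¬IsUnit (c i)) := by
  have hP : ∃ k, ∃ x : Fin k → N, span R (Set.range x) = ⊤ := by
    obtain ⟨k, s, hs⟩ := Module.Finite.exists_fin (R := R) (M := N)
    exact ⟨k, s, hs⟩
  classical
  obtain ⟨x, hx⟩ := Nat.find_spec hP
  have hmin : ∀ m, m < Nat.find hP → ¬∃ y : Fin m → N, span R (Set.range y) = ⊤ :=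
    fun m hm => Nat.find_min hP hm
  refine ⟨Nat.find hP, x, hx, ?_⟩
  generalize hgen : Nat.find hP = n at x hx hmin
  intro c hc i₀ hunit
  have hpos : 0 < n := i₀.pos
  obtain ⟨m, hm⟩ : ∃ m, n = m + 1 := ⟨n - 1, (Nat.succ_pred_eq_of_pos hpos).symm⟩
  subst hm
  obtain ⟨u, hu⟩ := hunit
  have hsum : c i₀ • x i₀ + ∑ j, c (i₀.succAbove j) • x (i₀.succAbove j) = 0 := by
    rw [← Fin.sum_univ_succAbove (fun i => c i • x i) i₀]; exact hc
  have hx0 : x i₀ ∈ span R (Set.range (x ∘ i₀.succAbove)) := by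
    have : x i₀ = (↑u⁻¹ : R) • (c i₀ • x i₀) := by
      rw [smul_smul, ← hu, Units.inv_mul, one_smul]
    rw [this, show c i₀ • x i₀ = -∑ j, c (i₀.succAbove j) • x (i₀.succAbove j) by
      rw [eq_neg_iff_add_eq_zero]; exact hsum]
    refine smul_mem _ _ (neg_mem (sum_mem fun j _ => smul_mem _ _ (subset_span ⟨j, rfl⟩)))
  exact hmin m (by omega) ⟨_, span_removal x i₀ hx hx0⟩

theorem nakayama (N : Type) [AddCommGroup N] [Module R N] [Module.Finite R N]
    (h : (nonunitIdeal R) • (⊤ : Submodule R N) = ⊤) : Subsingleton N := by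
  obtain ⟨n, x, hspan, hrel⟩ := exists_min_gen (R := R) N
  match n, x, hspan, hrel with
  | 0, x, hspan, hrel =>
    refine subsingleton_of_forall_eq 0 fun y => ?_
    have : y ∈ span R (Set.range x) := by rw [hspan]; exact mem_top
    rwa [Set.range_eq_empty, span_empty, mem_bot] at this
  | (m + 1), x, hspan, hrel =>
    exfalso
    classical
    have hy : x (Fin.last m) ∈ (nonunitIdeal R) • (⊤ : Submodule R N) := by
      rw [h]; exact mem_top
    have hcomb : ∃ c : Fin (m + 1) → R, (∀ i, ¬IsUnit (c i)) ∧
        x (Fin.last m) = ∑ i, c i • x i := by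
      refine Submodule.smul_induction_on hy ?_ ?_
      · intro r hr w _
        have : w ∈ span R (Set.range x) := by rw [hspan]; exact mem_top
        obtain ⟨d, hd⟩ := (mem_span_range_iff_exists_fun R).mp this
        refine ⟨fun i => r * d i, fun i hu => hr (myUnitLeft hu), ?_⟩
        rw [← hd, Finset.smul_sum]
        refine Finset.sum_congr rfl fun i _ => ?_
        show r • d i • x i = (r * d i) • x i
        rw [smul_smul]
      · rintro z w ⟨c, hc, rfl⟩ ⟨c', hc', rfl⟩
        refine ⟨fun i => c i + c' i, fun i hu => ?_, by
          rw [← Finset.sum_add_distrib]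
          exact Finset.sum_congr rfl fun i _ => (add_smul (c i) (c' i) (x i)).symm⟩
        · rcases IsLocalRing.isUnit_or_isUnit_of_add_one (a := c i * ↑hu.unit⁻¹)
            (b := c' i * ↑hu.unit⁻¹) (by rw [← add_mul]; exact hu.mul_val_inv) with
            hh | hh
          · exact hc i (myUnitLeft hh)
          · exact hc' i (myUnitLeft hh)
    obtain ⟨c, hc, hsum⟩ := hcomb
    set d : Fin (m + 1) → R := fun i => if i = Fin.last m then c i - 1 else c i with hd
    have hdz : ∑ i, d i • x i = 0 := by
      have h1 : ∀ i ∈ Finset.univ, d i • x i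
          = c i • x i - (if i = Fin.last m then x i else 0) := by
        intro i _
        by_cases hi : i = Fin.last m <;> simp [hd, hi, sub_smul]
      rw [Finset.sum_congr rfl h1, Finset.sum_sub_distrib, ← hsum, Finset.sum_ite_eq' _ _ _]
      simp
    have := hrel d hdz (Fin.last m)
    apply this
    have h1 : IsUnit (1 - c (Fin.last m)) := by
      rcases IsLocalRing.isUnit_or_isUnit_of_add_one
        (a := c (Fin.last m)) (b := 1 - c (Fin.last m)) (by abel) with hh | hh
      · exact absurd hh (hc _)
      · exact hh
    have : d (Fin.last m) = -(1 - c (Fin.last m)) := by simp [hd]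
    rw [this]
    exact h1.neg

end LocalTools

section MoreTools
variable {R : Type} [Ring R] [IsLocalRing R]

theorem superfluous_of_le {P : Type} [AddCommGroup P] [Module R P] [Module.Finite R P]
    {N : Submodule R P} (hN : N ≤ (nonunitIdeal R) • (⊤ : Submodule R P)) :
    ∀ N' : Submodule R P, N ⊔ N' = ⊤ → N' = ⊤ := by
  intro N' hsup
  have hq : (nonunitIdeal R) • (⊤ : Submodule R (P ⧸ N')) = ⊤ := by
    refine le_antisymm le_top ?_
    have h1 : Submodule.map N'.mkQ N' = ⊥ := le_bot_iff.mp
      (Submodule.map_le_iff_le_comap.mpr (by rw [Submodule.comap_bot, Submodule.ker_mkQ]))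
    have h2 : (⊤ : Submodule R (P ⧸ N')) = Submodule.map N'.mkQ ⊤ := by
      rw [Submodule.map_top, Submodule.range_mkQ]
    have h3 : (⊤ : Submodule R (P ⧸ N')) = Submodule.map N'.mkQ N := by
      rw [h2, ← hsup, Submodule.map_sup, h1, sup_bot_eq]
    calc (⊤ : Submodule R (P ⧸ N')) = Submodule.map N'.mkQ N := h3
      _ ≤ Submodule.map N'.mkQ ((nonunitIdeal R) • ⊤) := Submodule.map_mono hN
      _ = (nonunitIdeal R) • Submodule.map N'.mkQ ⊤ := Submodule.map_smul'' _ _ _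
      _ = (nonunitIdeal R) • ⊤ := by rw [Submodule.map_top, Submodule.range_mkQ]
  have := nakayama (P ⧸ N') hq
  exact Submodule.Quotient.subsingleton_iff.mp this

/-- linear combination map -/
def combo {N : Type} [AddCommGroup N] [Module R N] {k : ℕ} (x : Fin k → N) :
    (Fin k → R) →ₗ[R] N where
  toFun c := ∑ i, c i • x i
  map_add' c d := by
    rw [← Finset.sum_add_distrib]
    exact Finset.sum_congr rfl fun i _ => by
      show (c i + d i) • x i = c i • x i + d i • x i
      rw [add_smul]
  map_smul' a c := by
    show ∑ i, (a * c i) • x i = a • ∑ i, c i • x i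
    rw [Finset.smul_sum]
    exact Finset.sum_congr rfl fun i _ => by rw [smul_smul]

theorem range_combo {N : Type} [AddCommGroup N] [Module R N] {k : ℕ} (x : Fin k → N) :
    LinearMap.range (combo x) = span R (Set.range x) := by
  ext z
  rw [LinearMap.mem_range, mem_span_range_iff_exists_fun]
  rfl

theorem coords_mem_smul_top {k : ℕ} {c : Fin k → R} (hc : ∀ i, ¬IsUnit (c i)) :
    c ∈ (nonunitIdeal R) • (⊤ : Submodule R (Fin k → R)) := by
  classical
  have : c = ∑ i, Pi.single i (c i) := (Finset.univ_sum_single c).symm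
  rw [this]
  refine sum_mem fun i _ => ?_
  have h1 : (Pi.single i (c i) : Fin k → R) = c i • (Pi.single i (1 : R) : Fin k → R) := by
    ext j
    by_cases hj : j = i <;> simp [Pi.single_apply, hj]
  rw [h1]
  exact Submodule.smul_mem_smul (hc i) mem_top

end MoreTools

section AlgTools
variable (K : Type) [Field K] [IsAlgClosed K]
variable (Λ : Type) [Ring Λ] [Algebra K Λ] [FiniteDimensional K Λ] [IsLocalRing Λ]

theorem exists_algebraMap_sub_nonunit (a : Λ) :
    ∃ c : K, ¬IsUnit (a - algebraMap K Λ c) := by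
  by_contra hcon
  push_neg at hcon
  have hint : IsIntegral K a := Algebra.IsIntegral.isIntegral a
  have hmonic := minpoly.monic hint
  have hsplit : Polynomial.Splits (minpoly K a) := IsAlgClosed.splits _
  have hfact := hsplit.eq_prod_roots_of_monic hmonic
  set l := (minpoly K a).roots.toList with hldef
  have hl : minpoly K a = (l.map fun c => Polynomial.X - Polynomial.C c).prod := by
    conv_lhs => rw [hfact]
    rw [← Multiset.coe_toList (minpoly K a).roots, Multiset.map_coe, Multiset.prod_coe]
  have h0 : (l.map fun c => a - algebraMap K Λ c).prod = 0 := by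
    have ha := minpoly.aeval K a
    rw [hl, map_list_prod (Polynomial.aeval a), List.map_map] at ha
    rw [← ha]
    congr 1
    apply List.map_congr_left
    intro c _
    simp [Polynomial.aeval_X, Polynomial.aeval_C, Algebra.algebraMap_eq_smul_one]
  have key : ∀ L : List Λ, (∀ z ∈ L, IsUnit z) → IsUnit L.prod := by
    intro L
    induction L with
    | nil => intro _; simp
    | cons hd tl ih =>
      intro hz
      rw [List.prod_cons]
      exact (hz hd List.mem_cons_self).mul (ih fun z hzz => hz z (List.mem_cons_of_mem hd hzz))
  have hunit : IsUnit ((l.map fun c => a - algebraMap K Λ c).prod) := by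
    refine key _ ?_
    intro z hzz
    obtain ⟨c, _, rfl⟩ := List.mem_map.mp hzz
    exact hcon c
  rw [h0] at hunit
  exact not_isUnit_zero hunit

end AlgTools

variable (K : Type) [Field K] [IsAlgClosed K]
variable (Λ : Type) [Ring Λ] [Algebra K Λ] [FiniteDimensional K Λ]

theorem stmt17 [IsLocalRing Λ] :
    (∀ (M : ModuleCat.{0} Λ), Module.Finite Λ M → IsTauRigid K Λ M →
      Module.Projective Λ M) ∧ IsCMTauTiltingFree K Λ := by
  have main : ∀ (M : ModuleCat.{0} Λ), Module.Finite Λ M → IsTauRigid K Λ M →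
      Module.Projective Λ M := by
    intro M hfin htau
    by_cases hMsub : Subsingleton ↥M
    · refine Module.Projective.of_split (M := Fin 0 → Λ) 0 0 ?_
      refine LinearMap.ext fun z => Subsingleton.elim _ _
    haveI hMnt : Nontrivial ↥M := not_subsingleton_iff_nontrivial.mp hMsub
    obtain ⟨n, x, hxspan, hxrel⟩ := exists_min_gen (R := Λ) ↥M
    set g : (Fin n → Λ) →ₗ[Λ] M := combo x with hgdef
    have hgsur : Surjective g := by
      rw [← LinearMap.range_eq_top, hgdef, range_combo, hxspan]
    have hgker : LinearMap.ker g ≤ (nonunitIdeal Λ) • (⊤ : Submodule Λ (Fin n → Λ)) := by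
      intro c hc
      exact coords_mem_smul_top (hxrel c hc)
    by_cases hker : LinearMap.ker g = ⊥
    · have hbij : Bijective g := ⟨LinearMap.ker_eq_bot.mp hker, hgsur⟩
      let e := LinearEquiv.ofBijective g hbij
      refine Module.Projective.of_split (M := Fin n → Λ) e.symm.toLinearMap e.toLinearMap ?_
      refine LinearMap.ext fun z => ?_
      simp
    -- finitely generated kernel
    haveI hNoeK : IsNoetherian K (Fin n → Λ) := inferInstance
    haveI hNoe : IsNoetherian Λ (Fin n → Λ) := isNoetherian_of_tower K hNoeK
    haveI : Module.Finite Λ ↥(LinearMap.ker g) :=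
      Module.Finite.iff_fg.mpr (IsNoetherian.noetherian _)
    obtain ⟨m, y, hyspan, hyrel⟩ := exists_min_gen (R := Λ) ↥(LinearMap.ker g)
    set f : (Fin m → Λ) →ₗ[Λ] (Fin n → Λ) := (LinearMap.ker g).subtype ∘ₗ combo y with hfdef
    have hfrange : LinearMap.range f = LinearMap.ker g := by
      rw [hfdef, LinearMap.range_comp, range_combo, hyspan, Submodule.map_top,
        Submodule.range_subtype]
    have hfker : LinearMap.ker f ≤ (nonunitIdeal Λ) • (⊤ : Submodule Λ (Fin m → Λ)) := by
      intro c hc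
      refine coords_mem_smul_top (hyrel c ?_)
      have h1 : (LinearMap.ker g).subtype (combo y c) = (LinearMap.ker g).subtype 0 := by
        rw [map_zero]
        exact hc
      exact Submodule.injective_subtype _ h1
    have hm : m ≠ 0 := by
      rintro rfl
      apply hker
      rw [← hfrange]
      refine LinearMap.range_eq_bot.mpr ?_
      exact LinearMap.ext fun c => by rw [Subsingleton.elim c 0, map_zero]; rfl
    have hminpres : IsMinimalProjPresentation f g := by
      refine ⟨inferInstance, inferInstance, inferInstance, inferInstance, hgsur, hfrange, ?_, ?_⟩
      · intro N' hsup
        exact superfluous_of_le hgker N' hsup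
      · intro N' hsup
        exact superfluous_of_le hfker N' hsup
    -- K-module structure on M
    letI instKM : Module K ↥M := Module.compHom ↥M (algebraMap K Λ)
    letI instTower : IsScalarTower K Λ ↥M := ⟨fun k a z => by
      show (k • a) • z = algebraMap K Λ k • (a • z)
      rw [Algebra.smul_def, mul_smul]⟩
    -- functional ℓ on M
    have hJM : ((nonunitIdeal Λ) • ⊤ : Submodule Λ ↥M) ≠ ⊤ := by
      intro hEq
      exact (not_subsingleton_iff_nontrivial.mpr hMnt) (nakayama ↥M hEq)
    obtain ⟨x₁, hx₁⟩ : ∃ x₁ : ↥M, x₁ ∉ ((nonunitIdeal Λ) • ⊤ : Submodule Λ ↥M) := by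
      by_contra hcon
      push_neg at hcon
      exact hJM (Submodule.eq_top_iff'.mpr hcon)
    set UM : Submodule K ↥M := ((nonunitIdeal Λ) • ⊤ : Submodule Λ ↥M).restrictScalars K
      with hUMdef
    have hq1 : UM.mkQ x₁ ≠ 0 := fun h => hx₁ ((Submodule.Quotient.mk_eq_zero _).mp h)
    obtain ⟨ℓ0, hℓ0⟩ : ∃ ℓ0 : Module.Dual K (↥M ⧸ UM), ℓ0 (UM.mkQ x₁) ≠ 0 := by
      by_contra hcon
      push_neg at hcon
      exact hq1 ((Module.forall_dual_apply_eq_zero_iff K _).mp hcon)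
    set ℓ : ↥M →ₗ[K] K := ℓ0 ∘ₗ UM.mkQ with hℓdef
    have hℓx₁ : ℓ x₁ ≠ 0 := hℓ0
    have hℓJ : ∀ z ∈ ((nonunitIdeal Λ) • ⊤ : Submodule Λ ↥M), ℓ z = 0 := by
      intro z hz
      show ℓ0 (UM.mkQ z) = 0
      rw [show UM.mkQ z = 0 from (Submodule.Quotient.mk_eq_zero _).mpr hz, map_zero]
    -- the coordinate functional π₁ and evaluation
    have hmpos : 0 < m := Nat.pos_of_ne_zero hm
    set i₀ : Fin m := ⟨0, hmpos⟩ with hi₀def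
    set π₁ : (Fin m → Λ) →ₗ[Λ] Λ := LinearMap.proj i₀ with hπdef
    set ev : ((Fin m → Λ) →ₗ[Λ] Λ) →ₗ[K] Λ :=
      { toFun := fun φ => φ (Pi.single i₀ 1),
        map_add' := fun φ ψ => rfl,
        map_smul' := fun k φ => rfl } with hevdef
    set SS : Set ((Fin m → Λ) →ₗ[Λ] Λ) :=
      {z | ∃ (r : Λ) (φ : (Fin m → Λ) →ₗ[Λ] Λ), ¬IsUnit r ∧ z = op r • φ} with hSSdef
    set U' : Submodule K ((Fin m → Λ) →ₗ[Λ] Λ) :=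
      Submodule.span K SS ⊔ (LinearMap.range (transposeHomMap f)).restrictScalars K with hU'def
    have hU'le : U' ≤ Submodule.comap ev ((nonunitIdeal Λ).restrictScalars K) := by
      refine sup_le ?_ ?_
      · rw [Submodule.span_le]
        rintro z ⟨r, φ, hr, rfl⟩
        show φ (Pi.single i₀ 1) * r ∈ nonunitIdeal Λ
        exact Ideal.mul_mem_left _ _ hr
      · rintro z ⟨ψ, rfl⟩
        show ψ (f (Pi.single i₀ 1)) ∈ nonunitIdeal Λ
        have hf1 : f (Pi.single i₀ 1) ∈ (nonunitIdeal Λ) • (⊤ : Submodule Λ (Fin n → Λ)) :=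
          hgker (by rw [← hfrange]; exact ⟨_, rfl⟩)
        have hψ : ∀ w ∈ (nonunitIdeal Λ) • (⊤ : Submodule Λ (Fin n → Λ)),
            ψ w ∈ nonunitIdeal Λ := by
          intro w hw
          refine Submodule.smul_induction_on hw ?_ ?_
          · intro r hr v _
            rw [map_smul]
            exact nonunitIdeal_mul_mem hr _
          · intro u v hu hv
            rw [map_add]
            exact add_mem hu hv
        exact hψ _ hf1
    have hπ₁ : π₁ ∉ U' := by
      intro hmem
      have h2 : ev π₁ ∈ nonunitIdeal Λ := hU'le hmem
      have h1 : ev π₁ = 1 := by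
        show (LinearMap.proj i₀ : (Fin m → Λ) →ₗ[Λ] Λ) (Pi.single i₀ (1:Λ)) = 1
        simp
      rw [h1] at h2
      exact h2 isUnit_one
    -- functional η
    have hq2 : U'.mkQ π₁ ≠ 0 := fun h => hπ₁ ((Submodule.Quotient.mk_eq_zero _).mp h)
    obtain ⟨η0, hη0⟩ : ∃ η0 : Module.Dual K (((Fin m → Λ) →ₗ[Λ] Λ) ⧸ U'), η0 (U'.mkQ π₁) ≠ 0 := by
      by_contra hcon
      push_neg at hcon
      exact hq2 ((Module.forall_dual_apply_eq_zero_iff K _).mp hcon)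
    set η : ((Fin m → Λ) →ₗ[Λ] Λ) →ₗ[K] K := η0 ∘ₗ U'.mkQ with hηdef
    have hηπ : η π₁ ≠ 0 := hη0
    have hηU : ∀ z ∈ U', η z = 0 := by
      intro z hz
      show η0 (U'.mkQ z) = 0
      rw [show U'.mkQ z = 0 from (Submodule.Quotient.mk_eq_zero _).mpr hz, map_zero]
    -- descend η to the transpose
    set p := LinearMap.range (transposeHomMap f) with hpdef
    have hle : p.restrictScalars K ≤ LinearMap.ker η :=
      fun z hz => hηU z (Submodule.mem_sup_right hz)
    set ηb : TauOf K Λ f :=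
      (Submodule.liftQ (p.restrictScalars K) η hle) ∘ₗ
        (Submodule.Quotient.restrictScalarsEquiv K p).symm.toLinearMap with hηbdef
    have hηb_mk : ∀ φ : (Fin m → Λ) →ₗ[Λ] Λ,
        ηb (Submodule.Quotient.mk φ) = η φ := by
      intro φ
      show (Submodule.liftQ (p.restrictScalars K) η hle)
        ((Submodule.Quotient.restrictScalarsEquiv K p).symm (Submodule.Quotient.mk φ)) = η φ
      rw [Submodule.Quotient.restrictScalarsEquiv_symm_mk, Submodule.liftQ_apply]
    have key1 : ∀ r : Λ, ¬IsUnit r → r • ηb = 0 := by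
      intro r hr
      refine LinearMap.ext fun t => ?_
      obtain ⟨φ, rfl⟩ := Submodule.Quotient.mk_surjective _ t
      show ηb (op r • Submodule.Quotient.mk φ) = 0
      rw [← Submodule.Quotient.mk_smul, hηb_mk]
      exact hηU _ (Submodule.mem_sup_left (Submodule.subset_span ⟨r, φ, hr, rfl⟩))
    have key3 : ∀ c : K, (algebraMap K Λ c) • ηb = c • ηb := by
      intro c
      refine LinearMap.ext fun t => ?_
      obtain ⟨φ, rfl⟩ := Submodule.Quotient.mk_surjective _ t
      show ηb (op (algebraMap K Λ c) • Submodule.Quotient.mk φ) = c • ηb (Submodule.Quotient.mk φ)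
      rw [← Submodule.Quotient.mk_smul, hηb_mk, hηb_mk]
      have hcφ : op (algebraMap K Λ c) • φ = c • φ := by
        refine LinearMap.ext fun v => ?_
        show φ v * algebraMap K Λ c = c • φ v
        rw [Algebra.smul_def, Algebra.commutes]
      rw [hcφ, map_smul]
    -- the homomorphism M → τM
    set hmap : ↥M →ₗ[Λ] TauOf K Λ f :=
      { toFun := fun z => ℓ z • ηb,
        map_add' := fun z w => by
          show ℓ (z + w) • ηb = ℓ z • ηb + ℓ w • ηb
          rw [map_add, add_smul],
        map_smul' := fun a z => by
          obtain ⟨c, hc⟩ := exists_algebraMap_sub_nonunit K Λ a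
          show ℓ (a • z) • ηb = a • (ℓ z • ηb)
          have ha : a = algebraMap K Λ c + (a - algebraMap K Λ c) := by abel
          have hA : ℓ (a • z) = c * ℓ z := by
            have h1 : a • z = algebraMap K Λ c • z + (a - algebraMap K Λ c) • z := by
              rw [← add_smul, ← ha]
            rw [h1, map_add, hℓJ _ (Submodule.smul_mem_smul hc Submodule.mem_top), add_zero]
            have h2 : algebraMap K Λ c • z = c • z := rfl
            rw [h2, map_smul]
            rfl
          have hcomm : ∀ (b : Λ) (k : K) (w : TauOf K Λ f), b • (k • w) = k • (b • w) :=
            fun b k w => rfl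
          have hB : a • (ℓ z • ηb) = c • (ℓ z • ηb) := by
            rw [hcomm a (ℓ z) ηb]
            have h3 : a • ηb = c • ηb := by
              conv_lhs => rw [ha]
              rw [add_smul, key1 _ hc, add_zero, key3]
            rw [h3, smul_comm]
          rw [hA, hB, mul_smul] } with hmapdef
    have hne : hmap ≠ 0 := by
      intro h0
      have h1 : hmap x₁ = 0 := by rw [h0]; rfl
      have h2 : (ℓ x₁ • ηb) (Submodule.Quotient.mk π₁) = 0 := by
        rw [show ℓ x₁ • ηb = (0 : TauOf K Λ f) from h1]; rfl
      rw [LinearMap.smul_apply, hηb_mk] at h2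
      exact mul_ne_zero hℓx₁ hηπ h2
    exact absurd
      (htau (ModuleCat.of Λ (Fin m → Λ)) (ModuleCat.of Λ (Fin n → Λ)) f g hminpres hmap) hne
  exact ⟨main, fun M hfin _ htau => main M hfin htau⟩
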